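/- Let p be a prime and R a commutative ring in which p·1 = 0. Let D₁, …, D_n be pairwise commuting derivations of R such that the p-fold composite D_i^p = 0 for each i, and suppose there are elements u₁, …, u_n ∈ R with D_i(u_j) = δ_ij for all i, j. Let S = {r ∈ R : D_i(r) = 0 for all i} be the subring of constants. Then u_i^p ∈ S for every i, and R is a free S-module with basis the monomials u₁^{a₁}⋯u_n^{a_n} for 0 ≤ a_i ≤ p−1; equivalently, the S-algebra homomorphism S[z₁, …, z_n]/(z₁^p − u₁^p, …, z_n^p − u_n^p) → R sending z_i to u_i is an isomorphism, so R is free of rank p^n over S. -/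

import Mathlib

open scoped BigOperators

open Finset

section JacobsonAux

variable {R : Type*} [CommRing R]

/-- cast mod p -/
lemma jac_cast_mod (p : ℕ) (hchar : (p : R) = 0) (a : ℕ) : ((a : ℕ) : R) = ((a % p : ℕ) : R) := by
  conv_lhs => rw [← Nat.mod_add_div a p]
  push_cast
  rw [hchar]; ring

lemma jac_cast_modEq (p : ℕ) (hchar : (p : R) = 0) {a b : ℕ} (h : a ≡ b [MOD p]) :
    ((a : ℕ) : R) = ((b : ℕ) : R) := by
  rw [jac_cast_mod p hchar a, jac_cast_mod p hchar b, show a % p = b % p from h]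

/-- inverse of k! mod p, as a natural number -/
def jacN (p k : ℕ) : ℕ := (((k.factorial : ZMod p))⁻¹).val

/-- inverse of k! in R -/
def facInv (p : ℕ) (R : Type*) [CommRing R] (k : ℕ) : R := ((jacN p k : ℕ) : R)

lemma jacN_modEq (p : ℕ) (hp : p.Prime) {k : ℕ} (hk : k < p) :
    jacN p k * k.factorial ≡ 1 [MOD p] := by
  haveI : Fact p.Prime := ⟨hp⟩
  rw [← ZMod.natCast_eq_natCast_iff]
  have h1 : ((k.factorial : ZMod p)) ≠ 0 := by
    rw [Ne, ZMod.natCast_eq_zero_iff]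
    intro hdvd
    exact absurd ((Nat.Prime.dvd_factorial hp).mp hdvd) (not_le.mpr hk)
  push_cast
  rw [jacN, ZMod.natCast_val, ZMod.cast_id]
  rw [inv_mul_cancel₀ h1]

lemma facInv_mul_factorial (p : ℕ) (hp : p.Prime) (hchar : (p : R) = 0) {k : ℕ} (hk : k < p) :
    (facInv p R k) * (k.factorial : R) = 1 := by
  have := jac_cast_modEq p hchar (jacN_modEq p hp hk)
  push_cast at this
  simpa [facInv] using this

lemma facInv_zero (p : ℕ) (hp : p.Prime) (hchar : (p : R) = 0) : facInv p R 0 = 1 := by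
  have := facInv_mul_factorial (R := R) p hp hchar (k := 0) hp.pos
  simpa using this

lemma facInv_succ (p : ℕ) (hp : p.Prime) (hchar : (p : R) = 0) {k : ℕ} (hk : k + 1 < p) :
    ((k + 1 : ℕ) : R) * facInv p R (k + 1) = facInv p R k := by
  have hmod : (k + 1) * jacN p (k + 1) ≡ jacN p k [MOD p] := by
    haveI : Fact p.Prime := ⟨hp⟩
    rw [← ZMod.natCast_eq_natCast_iff, Nat.cast_mul]
    rw [jacN, jacN, ZMod.natCast_val, ZMod.cast_id, ZMod.natCast_val, ZMod.cast_id]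
    have h2 : ((k + 1 : ℕ) : ZMod p) ≠ 0 := by
      rw [Ne, ZMod.natCast_eq_zero_iff]
      intro hdvd
      exact absurd (Nat.le_of_dvd (Nat.succ_pos k) hdvd) (not_le.mpr hk)
    have h3 : ((k + 1).factorial : ZMod p) = ((k + 1 : ℕ) : ZMod p) * (k.factorial : ZMod p) := by
      rw [Nat.factorial_succ, Nat.cast_mul]
    rw [h3, mul_inv_rev, mul_comm (((k.factorial : ZMod p))⁻¹) _, ← mul_assoc,
      mul_inv_cancel₀ h2, one_mul]
  have := jac_cast_modEq p hchar hmod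
  push_cast at this
  simpa [facInv] using this

lemma facInv_desc (p : ℕ) (hp : p.Prime) (hchar : (p : R) = 0) {j : ℕ} (hj : j < p) (m : ℕ) :
    facInv p R j * ((m.descFactorial j : ℕ) : R) = ((m.choose j : ℕ) : R) := by
  have hmod : jacN p j * m.descFactorial j ≡ m.choose j [MOD p] := by
    haveI : Fact p.Prime := ⟨hp⟩
    rw [← ZMod.natCast_eq_natCast_iff]
    push_cast
    rw [jacN, ZMod.natCast_val, ZMod.cast_id]
    have h1 : ((j.factorial : ZMod p)) ≠ 0 := by
      rw [Ne, ZMod.natCast_eq_zero_iff]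
      intro hdvd
      exact absurd ((Nat.Prime.dvd_factorial hp).mp hdvd) (not_le.mpr hj)
    rw [Nat.descFactorial_eq_factorial_mul_choose]
    push_cast
    rw [← mul_assoc, inv_mul_cancel₀ h1, one_mul]
  have := jac_cast_modEq p hchar hmod
  push_cast at this
  simpa [facInv] using this

lemma facInv_desc_self (p : ℕ) (hp : p.Prime) (hchar : (p : R) = 0) {m : ℕ} (hm : m < p) :
    facInv p R m * ((m.descFactorial m : ℕ) : R) = 1 := by
  rw [Nat.descFactorial_self]
  exact facInv_mul_factorial p hp hchar hm

lemma jac_cancel {a b w w' : R} (hw : w * w' = 1) (h : a * w = b * w) : a = b := by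
  have h2 := congrArg (· * w') h
  simpa [mul_assoc, hw] using h2

section SingleVar

variable (D : Derivation ℤ R R)

lemma itD_add (j : ℕ) (a b : R) : (⇑D)^[j] (a + b) = (⇑D)^[j] a + (⇑D)^[j] b := by
  induction j generalizing a b with
  | zero => rfl
  | succ j ih => rw [Function.iterate_succ_apply, Function.iterate_succ_apply,
      Function.iterate_succ_apply, map_add, ih]

lemma itD_zero (j : ℕ) : (⇑D)^[j] (0 : R) = 0 := Function.iterate_fixed (map_zero D) j

lemma itD_sub (j : ℕ) (a b : R) : (⇑D)^[j] (a - b) = (⇑D)^[j] a - (⇑D)^[j] b := by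
  induction j generalizing a b with
  | zero => rfl
  | succ j ih => rw [Function.iterate_succ_apply, Function.iterate_succ_apply,
      Function.iterate_succ_apply, map_sub, ih]

lemma itD_sum {ι : Type*} (s : Finset ι) (f : ι → R) (j : ℕ) :
    (⇑D)^[j] (∑ i ∈ s, f i) = ∑ i ∈ s, (⇑D)^[j] (f i) := by
  classical
  induction s using Finset.cons_induction with
  | empty => simp [itD_zero]
  | cons i s hi ih => rw [Finset.sum_cons, Finset.sum_cons, itD_add, ih]

lemma D_const_mul {x : R} (hx : D x = 0) (y : R) : D (x * y) = x * D y := by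
  rw [D.leibniz, hx, smul_eq_mul, smul_eq_mul, mul_zero, add_zero]

lemma itD_const_mul {x : R} (hx : D x = 0) (j : ℕ) (y : R) :
    (⇑D)^[j] (x * y) = x * (⇑D)^[j] y := by
  induction j generalizing y with
  | zero => rfl
  | succ j ih => rw [Function.iterate_succ_apply, Function.iterate_succ_apply,
      D_const_mul D hx, ih]

lemma itD_pow {u : R} (hu : D u = 1) (j m : ℕ) :
    (⇑D)^[j] (u ^ m) = ((m.descFactorial j : ℕ) : R) * u ^ (m - j) := by
  induction j generalizing m with
  | zero => simp
  | succ j ih =>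
    rw [Function.iterate_succ_apply]
    have hD : D (u ^ m) = (m : R) * u ^ (m - 1) := by
      rw [D.leibniz_pow, hu, smul_eq_mul, mul_one, nsmul_eq_mul]
    rw [hD, itD_const_mul D (by simp) j, ih]
    cases m with
    | zero => simp
    | succ m' =>
      rw [Nat.succ_descFactorial_succ]
      push_cast
      ring

end SingleVar

/-- The Taylor-projection operator. -/
def Tfun (p : ℕ) (D : Derivation ℤ R R) (u : R) (r : R) : R :=
  ∑ j ∈ range p, (-1 : R) ^ j * facInv p R j * (u ^ j * (⇑D)^[j] r)

/-- The coefficient extraction operator. -/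
def Phi (p : ℕ) (D : Derivation ℤ R R) (u : R) (k : ℕ) (r : R) : R :=
  facInv p R k * Tfun p D u ((⇑D)^[k] r)

section SingleVar2

variable (p : ℕ) (D : Derivation ℤ R R) (u : R)

lemma facInv_const (k : ℕ) : D (facInv p R k) = 0 := by
  rw [facInv]; exact D.map_natCast _

lemma Tfun_zero : Tfun p D u 0 = 0 := by
  simp [Tfun, itD_zero]

lemma Tfun_sub (a b : R) : Tfun p D u (a - b) = Tfun p D u a - Tfun p D u b := by
  simp only [Tfun, itD_sub, mul_sub, Finset.sum_sub_distrib]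

lemma Tfun_sum {ι : Type*} (s : Finset ι) (f : ι → R) :
    Tfun p D u (∑ i ∈ s, f i) = ∑ i ∈ s, Tfun p D u (f i) := by
  simp only [Tfun, itD_sum, Finset.mul_sum]
  rw [Finset.sum_comm]

lemma Tfun_const_mul {x : R} (hx : D x = 0) (y : R) :
    Tfun p D u (x * y) = x * Tfun p D u y := by
  simp only [Tfun, itD_const_mul D hx, Finset.mul_sum]
  exact Finset.sum_congr rfl fun j _ => by ring

lemma Phi_zero (k : ℕ) : Phi p D u k 0 = 0 := by
  simp [Phi, itD_zero, Tfun_zero]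

lemma Phi_sum {ι : Type*} (s : Finset ι) (f : ι → R) (k : ℕ) :
    Phi p D u k (∑ i ∈ s, f i) = ∑ i ∈ s, Phi p D u k (f i) := by
  simp only [Phi, itD_sum, Tfun_sum, Finset.mul_sum]

lemma D_Tfun (hp : p.Prime) (hchar : (p : R) = 0) (hu : D u = 1)
    (hpow : ∀ r : R, (⇑D)^[p] r = 0) (r : R) : D (Tfun p D u r) = 0 := by
  obtain ⟨q, hq⟩ : ∃ q, p = q + 1 := ⟨p - 1, (Nat.succ_pred_eq_of_pos hp.pos).symm⟩
  set g : ℕ → R := fun j => (-1 : R) ^ j * facInv p R j * (u ^ j * (⇑D)^[j + 1] r) with hg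
  have hc : ∀ j : ℕ, D ((-1 : R) ^ j * facInv p R j) = 0 := by
    intro j
    have h1 : D ((-1 : R) ^ j) = 0 := by
      rw [D.leibniz_pow]
      simp
    rw [D.leibniz, h1, facInv_const p D, smul_eq_mul, smul_eq_mul, mul_zero, mul_zero, add_zero]
  have hterm : ∀ j ∈ range p,
      D ((-1 : R) ^ j * facInv p R j * (u ^ j * (⇑D)^[j] r))
        = g j - (if j = 0 then 0 else g (j - 1)) := by
    intro j hj
    rw [D_const_mul D (hc j), D.leibniz, smul_eq_mul, smul_eq_mul]
    have hDu : D (u ^ j) = (j : R) * u ^ (j - 1) := by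
      rw [D.leibniz_pow, hu, smul_eq_mul, mul_one, nsmul_eq_mul]
    rw [hDu, ← Function.iterate_succ_apply' (⇑D) j r]
    cases j with
    | zero => simp [hg]
    | succ j' =>
      rw [if_neg (Nat.succ_ne_zero j')]
      have hlt : j' + 1 < p := mem_range.mp hj
      have key' : facInv p R (j' + 1) * ((j' + 1 : ℕ) : R) = facInv p R j' := by
        rw [mul_comm]; exact facInv_succ p hp hchar hlt
      simp only [hg, Nat.add_sub_cancel]
      push_cast
      push_cast at key'
      linear_combination ((-1 : R) ^ (j' + 1) * (u ^ j' * (⇑D)^[j' + 1] r)) * key'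
  have hgq : g q = 0 := by
    have hzero : (⇑D)^[q + 1] r = 0 := by rw [← hq]; exact hpow r
    have hzero' : (⇑D)^[q] (D r) = 0 := by
      rw [← Function.iterate_succ_apply]; exact hzero
    simp [hg, hzero, hzero']
  rw [Tfun, map_sum, Finset.sum_congr rfl hterm, Finset.sum_sub_distrib, hq,
    Finset.sum_range_succ' (fun j => if j = 0 then (0 : R) else g (j - 1)) q,
    Finset.sum_range_succ]
  simp [hgq]

end SingleVar2

section SingleVar3

variable (p : ℕ) (D : Derivation ℤ R R) (u : R)

lemma D_Phi (hp : p.Prime) (hchar : (p : R) = 0) (hu : D u = 1)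
    (hpow : ∀ r : R, (⇑D)^[p] r = 0) (k : ℕ) (r : R) : D (Phi p D u k r) = 0 := by
  rw [Phi, D_const_mul D (facInv_const p D k), D_Tfun p D u hp hchar hu hpow, mul_zero]

lemma Tfun_upow (hp : p.Prime) (hchar : (p : R) = 0) (hu : D u = 1) {m : ℕ} (hm : m < p) :
    Tfun p D u (u ^ m) = if m = 0 then 1 else 0 := by
  have hterm : ∀ j ∈ range p,
      (-1 : R) ^ j * facInv p R j * (u ^ j * (⇑D)^[j] (u ^ m))
        = ((-1 : R) ^ j * ((m.choose j : ℕ) : R)) * u ^ m := by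
    intro j hj
    rw [itD_pow D hu]
    rcases le_or_gt j m with hjm | hjm
    · have h1 : facInv p R j * ((m.descFactorial j : ℕ) : R) = ((m.choose j : ℕ) : R) :=
        facInv_desc p hp hchar (mem_range.mp hj) m
      have h2 : u ^ j * u ^ (m - j) = u ^ m := by
        rw [← pow_add, Nat.add_sub_cancel' hjm]
      calc (-1 : R) ^ j * facInv p R j * (u ^ j * (((m.descFactorial j : ℕ) : R) * u ^ (m - j)))
          = (-1 : R) ^ j * (facInv p R j * ((m.descFactorial j : ℕ) : R)) * (u ^ j * u ^ (m - j)) := by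
            ring
        _ = _ := by rw [h1, h2]
    · rw [Nat.descFactorial_eq_zero_iff_lt.mpr hjm, Nat.choose_eq_zero_of_lt hjm]
      simp
  rw [Tfun, Finset.sum_congr rfl hterm, ← Finset.sum_mul]
  have hsub : (range (m + 1)) ⊆ range p := Finset.range_subset_range.mpr hm
  have hs : ∑ j ∈ range p, (-1 : R) ^ j * ((m.choose j : ℕ) : R)
      = ∑ j ∈ range (m + 1), (-1 : R) ^ j * ((m.choose j : ℕ) : R) := by
    refine (Finset.sum_subset hsub ?_).symm
    intro j _ hj
    rw [Nat.choose_eq_zero_of_lt (by simpa using hj)]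
    simp
  have hint : ∑ j ∈ range (m + 1), (-1 : R) ^ j * ((m.choose j : ℕ) : R)
      = if m = 0 then 1 else 0 := by
    have := Int.alternating_sum_range_choose (n := m)
    have h2 := congrArg (fun z : ℤ => (z : R)) this
    push_cast at h2
    rw [h2]
  rw [hs, hint]
  rcases eq_or_ne m 0 with h | h <;> simp [h]

lemma Phi_upow_mul (hp : p.Prime) (hchar : (p : R) = 0) (hu : D u = 1)
    {x : R} (hx : D x = 0) {k m : ℕ} (hk : k < p) (hm : m < p) :
    Phi p D u k (u ^ m * x) = if k = m then x else 0 := by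
  rw [Phi, mul_comm (u ^ m) x, itD_const_mul D hx, itD_pow D hu,
    ← mul_assoc x, mul_comm x ((m.descFactorial k : ℕ) : R), mul_assoc,
    Tfun_const_mul p D u (D.map_natCast _), Tfun_const_mul p D u hx]
  rcases lt_trichotomy k m with hkm | hkm | hkm
  · rw [if_neg (Nat.ne_of_lt hkm)]
    rw [Tfun_upow p D u hp hchar hu (lt_of_le_of_lt (Nat.sub_le m k) hm),
      if_neg (Nat.sub_ne_zero_of_lt hkm)]
    ring
  · subst hkm
    rw [if_pos rfl, Nat.sub_self, Tfun_upow p D u hp hchar hu hp.pos, if_pos rfl]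
    have := facInv_desc_self (R := R) p hp hchar hk
    calc facInv p R k * (((k.descFactorial k : ℕ) : R) * (x * 1))
        = facInv p R k * ((k.descFactorial k : ℕ) : R) * x := by ring
      _ = x := by rw [this, one_mul]
  · rw [if_neg (Nat.ne_of_gt hkm), Nat.descFactorial_eq_zero_iff_lt.mpr hkm]
    simp

end SingleVar3

section SingleVar4

variable (p : ℕ) (D : Derivation ℤ R R) (u : R)

lemma taylor_aux (hp : p.Prime) (hchar : (p : R) = 0) (hu : D u = 1)
    (hpow : ∀ r : R, (⇑D)^[p] r = 0) :
    ∀ t, t ≤ p → ∀ r : R, (⇑D)^[t] r = 0 → r = ∑ k ∈ range t, u ^ k * Phi p D u k r := by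
  intro t
  induction t with
  | zero => intro _ r hr; simpa using hr
  | succ t ih =>
    intro ht r hr
    have htp : t ≤ p := Nat.le_of_succ_le ht
    have hDr : (⇑D)^[t] (D r) = 0 := by
      rw [← Function.iterate_succ_apply]; exact hr
    have hIH := ih htp (D r) hDr
    set s := r - ∑ k ∈ range (t + 1), u ^ k * Phi p D u k r with hs
    have hDs : D s = 0 := by
      rw [hs, map_sub, map_sum]
      have hterm : ∀ k ∈ range (t + 1),
          D (u ^ k * Phi p D u k r) = Phi p D u k r * (((k : ℕ) : R) * u ^ (k - 1)) := by
        intro k _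
        rw [D.leibniz, D_Phi p D u hp hchar hu hpow, D.leibniz_pow, hu, smul_zero, zero_add,
          smul_eq_mul, smul_eq_mul, nsmul_eq_mul, mul_one]
      rw [Finset.sum_congr rfl hterm,
        Finset.sum_range_succ' (fun k => Phi p D u k r * (((k : ℕ) : R) * u ^ (k - 1))) t]
      have hterm2 : ∀ i ∈ range t,
          Phi p D u (i + 1) r * (((i + 1 : ℕ) : R) * u ^ (i + 1 - 1))
            = u ^ i * Phi p D u i (D r) := by
        intro i hi
        have hlt : i + 1 < p := lt_of_lt_of_le (Nat.succ_lt_succ (mem_range.mp hi)) ht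
        have key : ((i + 1 : ℕ) : R) * Phi p D u (i + 1) r = Phi p D u i (D r) := by
          rw [Phi, Phi, Function.iterate_succ_apply, ← mul_assoc,
            facInv_succ p hp hchar hlt]
        rw [Nat.add_sub_cancel]
        calc Phi p D u (i + 1) r * (((i + 1 : ℕ) : R) * u ^ i)
            = u ^ i * (((i + 1 : ℕ) : R) * Phi p D u (i + 1) r) := by ring
          _ = u ^ i * Phi p D u i (D r) := by rw [key]
      rw [Finset.sum_congr rfl hterm2]
      simp [← hIH]
    have hsj : ∀ j : ℕ, j ≠ 0 → (⇑D)^[j] s = 0 := by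
      intro j hj
      obtain ⟨j', rfl⟩ := Nat.exists_eq_succ_of_ne_zero hj
      rw [Function.iterate_succ_apply, hDs, itD_zero]
    have hTs : Tfun p D u s = s := by
      rw [Tfun]
      rw [Finset.sum_eq_single_of_mem 0 (mem_range.mpr hp.pos)
        (fun j _ hj => by rw [hsj j hj]; simp)]
      simp [facInv_zero p hp hchar]
    have hT0 : Tfun p D u s = 0 := by
      rw [hs, Tfun_sub, Tfun_sum]
      have hterm3 : ∀ k ∈ range (t + 1),
          Tfun p D u (u ^ k * Phi p D u k r)
            = if k = 0 then Tfun p D u r else 0 := by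
        intro k hk
        have hkp : k < p := lt_of_lt_of_le (mem_range.mp hk) ht
        rw [mul_comm, Tfun_const_mul p D u (D_Phi p D u hp hchar hu hpow k r),
          Tfun_upow p D u hp hchar hu hkp]
        rcases eq_or_ne k 0 with h | h
        · subst h
          simp [Phi, facInv_zero p hp hchar]
        · simp [h]
      rw [Finset.sum_congr rfl hterm3,
        Finset.sum_eq_single_of_mem 0 (mem_range.mpr (Nat.succ_pos t))
          (fun j _ hj => by rw [if_neg hj])]
      simp
    have hs0 : s = 0 := by rw [← hTs, hT0]
    have := sub_eq_zero.mp (hs.symm ▸ hs0)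
    exact this

lemma taylor (hp : p.Prime) (hchar : (p : R) = 0) (hu : D u = 1)
    (hpow : ∀ r : R, (⇑D)^[p] r = 0) (r : R) :
    r = ∑ k ∈ range p, u ^ k * Phi p D u k r :=
  taylor_aux p D u hp hchar hu hpow p le_rfl r (hpow r)

/-- Uniqueness of coefficients in a single-variable expansion, `Fin p`-indexed. -/
lemma coeff_unique_fin (hp : p.Prime) (hchar : (p : R) = 0) (hu : D u = 1)
    {t : Fin p → R} (ht : ∀ k, D (t k) = 0)
    (hsum : ∑ k : Fin p, u ^ (k : ℕ) * t k = 0) : ∀ k, t k = 0 := by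
  intro k
  have h1 : Phi p D u (k : ℕ) (∑ m : Fin p, u ^ (m : ℕ) * t m) = 0 := by
    rw [hsum, Phi_zero]
  rw [Phi_sum] at h1
  have hterm : ∀ m : Fin p, Phi p D u (k : ℕ) (u ^ (m : ℕ) * t m)
      = if m = k then t m else 0 := by
    intro m
    rw [Phi_upow_mul p D u hp hchar hu (ht m) k.isLt m.isLt]
    congr 1
    simp [Fin.ext_iff, eq_comm]
  rw [Finset.sum_congr rfl (fun m _ => hterm m), Finset.sum_ite_eq' Finset.univ k t] at h1
  simpa using h1

end SingleVar4

end JacobsonAux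

section Main

variable {R : Type*} [CommRing R]

lemma D_prod_eq_zero (D : Derivation ℤ R R) {ι : Type*} (s : Finset ι) (f : ι → R)
    (h : ∀ i ∈ s, D (f i) = 0) : D (∏ i ∈ s, f i) = 0 := by
  classical
  induction s using Finset.cons_induction with
  | empty => simpa using D.map_one_eq_zero
  | cons i s hi ih =>
    rw [Finset.prod_cons, D.leibniz, ih (fun j hj => h j (Finset.mem_cons_of_mem hj)),
      h i (Finset.mem_cons_self i s), smul_zero, smul_zero, add_zero]

lemma D_pow_eq_zero (D : Derivation ℤ R R) {x : R} (hx : D x = 0) (m : ℕ) : D (x ^ m) = 0 := by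
  rw [D.leibniz_pow, hx, smul_zero, smul_zero]

lemma jac_main (p : ℕ) (hp : p.Prime) (hchar : (p : R) = 0) (n : ℕ) :
    ∀ (D : Fin n → Derivation ℤ R R),
      (∀ i j, ∀ r : R, D i (D j r) = D j (D i r)) →
      (∀ i, ∀ r : R, (⇑(D i))^[p] r = 0) →
      ∀ (u : Fin n → R), (∀ i j, D i (u j) = if i = j then 1 else 0) →
      ∀ r : R, ∃! c : (Fin n → Fin p) → R,
        (∀ (a : Fin n → Fin p) (j : Fin n), D j (c a) = 0) ∧
        r = ∑ a : Fin n → Fin p, c a * ∏ i, u i ^ (a i : ℕ) := by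
  induction n with
  | zero =>
    intro D hcomm hpow u hu r
    refine ⟨fun _ => r, ⟨fun a j => j.elim0, ?_⟩, ?_⟩
    · rw [Fintype.sum_unique]
      simp
    · rintro c₂ ⟨-, h2⟩
      funext a
      rw [Fintype.sum_unique] at h2
      simp at h2
      rw [Subsingleton.elim a default]
      exact h2.symm
  | succ n ih =>
    intro D hcomm hpow u hu r
    have hu0 : D 0 (u 0) = 1 := by simpa using hu 0 0
    have hpow0 : ∀ r : R, (⇑(D 0))^[p] r = 0 := hpow 0
    have hcomm' : ∀ i j, ∀ r : R,
        D (Fin.succ i) (D (Fin.succ j) r) = D (Fin.succ j) (D (Fin.succ i) r) :=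
      fun i j r => hcomm i.succ j.succ r
    have hpow' : ∀ i : Fin n, ∀ r : R, (⇑(D (Fin.succ i)))^[p] r = 0 := fun i => hpow i.succ
    have hu' : ∀ i j : Fin n,
        D (Fin.succ i) (u (Fin.succ j)) = if i = j then 1 else 0 := by
      intro i j
      have := hu i.succ j.succ
      simpa [Fin.succ_inj] using this
    have hu0i : ∀ i : Fin n, D 0 (u (Fin.succ i)) = 0 := by
      intro i
      have := hu 0 i.succ
      rwa [if_neg (Ne.symm (Fin.succ_ne_zero i))] at this
    have hprodconst : ∀ a' : Fin n → Fin p,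
        D 0 (∏ i : Fin n, u (Fin.succ i) ^ ((a' i : ℕ))) = 0 := by
      intro a'
      exact D_prod_eq_zero (D 0) _ _ fun i _ => D_pow_eq_zero (D 0) (hu0i i) _
    -- coefficients from the inductive hypothesis
    choose c' hc'const hc'sum using fun k : Fin p =>
      (ih (fun i => D i.succ) hcomm' hpow' (fun i => u i.succ) hu'
        (Phi p (D 0) (u 0) (k : ℕ) r)).exists
    -- the coefficients are also constant for `D 0`
    have h0 : ∀ (k : Fin p) (a : Fin n → Fin p), D 0 (c' k a) = 0 := by
      intro k a
      have huniq := ih (fun i => D i.succ) hcomm' hpow' (fun i => u i.succ) hu' 0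
      have hprop1 : (∀ (a : Fin n → Fin p) (j : Fin n),
          D j.succ ((fun a => D 0 (c' k a)) a) = 0) ∧
          (0 : R) = ∑ a : Fin n → Fin p, (fun a => D 0 (c' k a)) a
            * ∏ i : Fin n, u i.succ ^ ((a i : ℕ)) := by
        constructor
        · intro a j
          show D j.succ (D 0 (c' k a)) = 0
          rw [hcomm j.succ 0 (c' k a), hc'const k a j, map_zero]
        · have h1 := congrArg (⇑(D 0)) (hc'sum k)
          rw [D_Phi p (D 0) (u 0) hp hchar hu0 hpow0, map_sum] at h1
          have hterm : ∀ b : Fin n → Fin p,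
              D 0 (c' k b * ∏ i : Fin n, u i.succ ^ ((b i : ℕ)))
                = D 0 (c' k b) * ∏ i : Fin n, u i.succ ^ ((b i : ℕ)) := by
            intro b
            rw [(D 0).leibniz, hprodconst b, smul_zero, zero_add, smul_eq_mul, mul_comm]
          rw [Finset.sum_congr rfl (fun b _ => hterm b)] at h1
          exact h1
      have hprop0 : (∀ (a : Fin n → Fin p) (j : Fin n),
          D j.succ ((fun _ => (0 : R)) a) = 0) ∧
          (0 : R) = ∑ a : Fin n → Fin p, (fun _ => (0 : R)) a
            * ∏ i : Fin n, u i.succ ^ ((a i : ℕ)) := by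
        constructor
        · intro a j; exact map_zero _
        · simp
      have := huniq.unique hprop1 hprop0
      exact congrFun this a
    -- reindexing sums over `Fin (n+1) → Fin p`
    have reindex : ∀ F : (Fin (n + 1) → Fin p) → R,
        ∑ a : Fin (n + 1) → Fin p, F a
          = ∑ k : Fin p, ∑ a' : Fin n → Fin p, F (Fin.cons k a') := by
      intro F
      rw [← Equiv.sum_comp (Fin.consEquiv (fun _ => Fin p)) F, Fintype.sum_prod_type]
      rfl
    -- the combined coefficient function
    set c : (Fin (n + 1) → Fin p) → R := fun a => c' (a 0) (fun i => a i.succ) with hcdef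
    have hconsc : ∀ (k : Fin p) (a' : Fin n → Fin p), c (Fin.cons k a') = c' k a' := by
      intro k a'
      rw [hcdef]
      simp only [Fin.cons_zero, Fin.cons_succ]
    have hconsprod : ∀ (k : Fin p) (a' : Fin n → Fin p),
        (∏ i : Fin (n + 1), u i ^ (((Fin.cons k a' : Fin (n + 1) → Fin p) i : Fin p) : ℕ))
          = u 0 ^ (k : ℕ) * ∏ i : Fin n, u i.succ ^ ((a' i : ℕ)) := by
      intro k a'
      rw [Fin.prod_univ_succ]
      simp only [Fin.cons_zero, Fin.cons_succ]
    -- the expansion of r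
    have hsum : r = ∑ a : Fin (n + 1) → Fin p, c a * ∏ i, u i ^ ((a i : ℕ)) := by
      rw [reindex]
      have h1 := taylor p (D 0) (u 0) hp hchar hu0 hpow0 r
      rw [← Fin.sum_univ_eq_sum_range (fun k => u 0 ^ k * Phi p (D 0) (u 0) k r) p] at h1
      rw [h1]
      refine Finset.sum_congr rfl fun k _ => ?_
      rw [hc'sum k, Finset.mul_sum]
      refine Finset.sum_congr rfl fun a' _ => ?_
      rw [hconsc, hconsprod]
      ring
    have hconst : ∀ (a : Fin (n + 1) → Fin p) (j : Fin (n + 1)), D j (c a) = 0 := by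
      intro a j
      rcases Fin.eq_zero_or_eq_succ j with rfl | ⟨j', rfl⟩
      · exact h0 (a 0) _
      · exact hc'const (a 0) _ j'
    refine ⟨c, ⟨hconst, hsum⟩, ?_⟩
    -- uniqueness
    rintro c₂ ⟨h2const, h2sum⟩
    have hgroup : ∀ cc : (Fin (n + 1) → Fin p) → R,
        (∑ a : Fin (n + 1) → Fin p, cc a * ∏ i, u i ^ ((a i : ℕ)))
          = ∑ k : Fin p, u 0 ^ (k : ℕ)
              * ∑ a' : Fin n → Fin p, cc (Fin.cons k a') * ∏ i : Fin n, u i.succ ^ ((a' i : ℕ)) := by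
      intro cc
      rw [reindex]
      refine Finset.sum_congr rfl fun k _ => ?_
      rw [Finset.mul_sum]
      refine Finset.sum_congr rfl fun a' _ => ?_
      rw [hconsprod]
      ring
    set t : Fin p → R := fun k =>
      ∑ a' : Fin n → Fin p, c₂ (Fin.cons k a') * ∏ i : Fin n, u i.succ ^ ((a' i : ℕ)) with ht
    set t' : Fin p → R := fun k =>
      ∑ a' : Fin n → Fin p, c (Fin.cons k a') * ∏ i : Fin n, u i.succ ^ ((a' i : ℕ)) with ht'
    have hdiff : ∑ k : Fin p, u 0 ^ (k : ℕ) * (t k - t' k) = 0 := by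
      have e1 : r = ∑ k : Fin p, u 0 ^ (k : ℕ) * t k := by rw [h2sum, hgroup]
      have e2 : r = ∑ k : Fin p, u 0 ^ (k : ℕ) * t' k := by rw [hsum, hgroup]
      calc ∑ k : Fin p, u 0 ^ (k : ℕ) * (t k - t' k)
          = ∑ k : Fin p, (u 0 ^ (k : ℕ) * t k - u 0 ^ (k : ℕ) * t' k) := by
            refine Finset.sum_congr rfl fun k _ => ?_; ring
        _ = (∑ k : Fin p, u 0 ^ (k : ℕ) * t k) - ∑ k : Fin p, u 0 ^ (k : ℕ) * t' k :=
            Finset.sum_sub_distrib _ _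
        _ = 0 := by rw [← e1, ← e2, sub_self]
    have hDt : ∀ k : Fin p, D 0 (t k - t' k) = 0 := by
      intro k
      have haux : ∀ cc : (Fin (n + 1) → Fin p) → R,
          (∀ (a : Fin (n + 1) → Fin p) (j : Fin (n + 1)), D j (cc a) = 0) →
          D 0 (∑ a' : Fin n → Fin p, cc (Fin.cons k a')
            * ∏ i : Fin n, u i.succ ^ ((a' i : ℕ))) = 0 := by
        intro cc hcc
        rw [map_sum]
        refine Finset.sum_eq_zero fun a' _ => ?_
        rw [(D 0).leibniz, hprodconst a', hcc (Fin.cons k a') 0, smul_zero, smul_zero, add_zero]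
      rw [map_sub, ht, ht', haux c₂ h2const, haux c hconst, sub_self]
    have htt' : ∀ k : Fin p, t k - t' k = 0 :=
      coeff_unique_fin p (D 0) (u 0) hp hchar hu0 hDt hdiff
    -- now identify coefficients slice by slice using the inductive uniqueness
    have hslice : ∀ k : Fin p, (fun a' => c₂ (Fin.cons k a')) = fun a' => c (Fin.cons k a') := by
      intro k
      have huniq := ih (fun i => D i.succ) hcomm' hpow' (fun i => u i.succ) hu' (t k)
      have hP2 : (∀ (a' : Fin n → Fin p) (j : Fin n),
          D j.succ (c₂ (Fin.cons k a')) = 0) ∧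
          t k = ∑ a' : Fin n → Fin p, c₂ (Fin.cons k a')
            * ∏ i : Fin n, u i.succ ^ ((a' i : ℕ)) :=
        ⟨fun a' j => h2const (Fin.cons k a') j.succ, by rw [ht]⟩
      have hP1 : (∀ (a' : Fin n → Fin p) (j : Fin n),
          D j.succ (c (Fin.cons k a')) = 0) ∧
          t k = ∑ a' : Fin n → Fin p, c (Fin.cons k a')
            * ∏ i : Fin n, u i.succ ^ ((a' i : ℕ)) := by
        refine ⟨fun a' j => hconst (Fin.cons k a') j.succ, ?_⟩
        have := sub_eq_zero.mp (htt' k)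
        rw [this, ht']
      exact huniq.unique hP2 hP1
    funext a
    have ha : Fin.cons (a 0) (Fin.tail a) = a := Fin.cons_self_tail a
    have := congrFun (hslice (a 0)) (Fin.tail a)
    simpa [ha, Fin.tail] using this

end Main



/-- **Jacobson's theorem on rings of constants.** Let `R` be a commutative ring with
`p · 1 = 0` for a prime `p`, and let `D₁, …, Dₙ` be pairwise commuting derivations of `R`
with `Dᵢᵖ = 0`, admitting elements `u₁, …, uₙ` with `Dᵢ(uⱼ) = δᵢⱼ`. Then each `uᵢᵖ` is a
constant (killed by all the `Dⱼ`), and every element of `R` is uniquely a combination of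
the monomials `u₁^{a₁} ⋯ uₙ^{aₙ}` (`0 ≤ aᵢ ≤ p - 1`) with constant coefficients; that is,
`R` is free of rank `pⁿ` over its subring of constants, with the monomials as basis. -/
theorem free_over_constants_of_commuting_derivations
    (p : ℕ) (hp : p.Prime) (R : Type*) [CommRing R] (hchar : (p : R) = 0)
    (n : ℕ) (D : Fin n → Derivation ℤ R R)
    (hcomm : ∀ i j, ∀ r : R, D i (D j r) = D j (D i r))
    (hpow : ∀ i, ∀ r : R, (⇑(D i))^[p] r = 0)
    (u : Fin n → R) (hu : ∀ i j, D i (u j) = if i = j then 1 else 0) :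
    (∀ i j, D j (u i ^ p) = 0) ∧
    ∀ r : R, ∃! c : (Fin n → Fin p) → R,
      (∀ (a : Fin n → Fin p) (j : Fin n), D j (c a) = 0) ∧
      r = ∑ a : Fin n → Fin p, c a * ∏ i, u i ^ (a i : ℕ) := by
  constructor
  · intro i j
    rw [Derivation.leibniz_pow, nsmul_eq_mul, hchar, zero_mul]
  · exact jac_main p hp hchar n D hcomm hpow u hu
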